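/- Let F : ℝ^d → ℝ be differentiable with L-Lipschitz gradient and μ-strongly convex in the sense that ‖∇F(x)‖² ≥ 2μ·(F(x) − F(x*)) for all x ∈ ℝ^d, where x* is a minimizer of F and 0 < μ ≤ L. Fix ν > 0 and θ > 0. Let (Ω, 𝓐, P) be a probability space with a filtration (𝓕_k)_{k≥0}, and let (x_k)_{k≥0} and (G_k)_{k≥0} be random sequences in ℝ^d such that x_k is 𝓕_k-measurable, F(x_k), ‖∇F(x_k)‖² and ‖G_k‖² are integrable, x_{k+1} = x_k − α·G_k with the fixed step size α = 1/(4(1 + θ²)L), and for every k, E[G_k | 𝓕_k] = ∇^{FD}F(x_k) and E[‖G_k − ∇^{FD}F(x_k)‖² | 𝓕_k] ≤ θ²·‖∇^{FD}F(x_k)‖² almost surely. Then for every k ≥ 0, E[F(x_k) − F(x*)] ≤ (1 − Ω₃)^k · ( E[F(x_0)] − F(x*) − Ω₄ ) + Ω₄, where Ω₃ := μ/(8(1 + θ²)L) and Ω₄ := 3·L²·ν²·d/(8μ). -/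

import Mathlib

open MeasureTheory InnerProductSpace

/-- The forward finite-difference gradient estimator
`∇^{FD}F(x) := ∑ⱼ ((F(x + ν eⱼ) − F(x))/ν) eⱼ`. -/
noncomputable def fdGrad {d : ℕ} (F : EuclideanSpace ℝ (Fin d) → ℝ) (ν : ℝ)
    (x : EuclideanSpace ℝ (Fin d)) : EuclideanSpace ℝ (Fin d) :=
  ∑ j, ((F (x + ν • EuclideanSpace.single j (1 : ℝ)) - F x) / ν) •
    EuclideanSpace.single j (1 : ℝ)

section Helpers

open InnerProductSpace

variable {H : Type*} [NormedAddCommGroup H] [InnerProductSpace ℝ H] [CompleteSpace H]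

lemma inner_gradient_eq (F : H → ℝ) (z v : H) :
    ⟪gradient F z, v⟫_ℝ = fderiv ℝ F z v := by
  rw [gradient, toDual_symm_apply]

lemma grad_continuous {F : H → ℝ} {L : ℝ} (hL : 0 ≤ L)
    (hLip : ∀ x y, ‖gradient F x - gradient F y‖ ≤ L * ‖x - y‖) :
    Continuous (gradient F) := by
  refine (LipschitzWith.of_dist_le_mul (K := L.toNNReal) fun a b => ?_).continuous
  rw [dist_eq_norm, dist_eq_norm, Real.coe_toNNReal L hL]
  exact hLip a b

lemma taylor_bound {F : H → ℝ} {L : ℝ} (hL : 0 ≤ L) (hF : Differentiable ℝ F)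
    (hLip : ∀ x y, ‖gradient F x - gradient F y‖ ≤ L * ‖x - y‖)
    (x v : H) :
    |F (x + v) - F x - ⟪gradient F x, v⟫_ℝ| ≤ L / 2 * ‖v‖ ^ 2 := by
  set ψ : ℝ → ℝ := fun t => ⟪gradient F (x + t • v), v⟫_ℝ with hψ
  have hline : ∀ t : ℝ, HasDerivAt (fun s : ℝ => x + s • v) v t := fun t => by
    simpa using ((hasDerivAt_id t).smul_const v).const_add x
  have hderiv : ∀ t : ℝ, HasDerivAt (fun s : ℝ => F (x + s • v)) (ψ t) t := by
    intro t
    have h1 := (hF (x + t • v)).hasFDerivAt.comp_hasDerivAt t (hline t)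
    simpa [hψ, inner_gradient_eq, Function.comp_def] using h1
  have hcont : Continuous ψ := by
    have : Continuous fun t : ℝ => x + t • v := by continuity
    exact ((grad_continuous hL hLip).comp this).inner continuous_const
  have hint : ∀ a b : ℝ, IntervalIntegrable ψ MeasureTheory.volume a b :=
    fun a b => hcont.intervalIntegrable a b
  have heq : F (x + v) - F x = ∫ t in (0:ℝ)..1, ψ t := by
    rw [intervalIntegral.integral_eq_sub_of_hasDerivAt (fun t _ => hderiv t) (hint 0 1)]
    simp
  have hψ0 : ψ 0 = ⟪gradient F x, v⟫_ℝ := by simp [hψ]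
  have key : F (x + v) - F x - ⟪gradient F x, v⟫_ℝ = ∫ t in (0:ℝ)..1, (ψ t - ψ 0) := by
    rw [intervalIntegral.integral_sub (hint 0 1) intervalIntegrable_const,
      intervalIntegral.integral_const]
    rw [heq, hψ0]; ring_nf
  rw [key]
  have hbound : ∀ t ∈ Set.Icc (0:ℝ) 1, |ψ t - ψ 0| ≤ L * ‖v‖ ^ 2 * t := by
    rintro t ⟨ht0, ht1⟩
    have h1 : ψ t - ψ 0 = ⟪gradient F (x + t • v) - gradient F x, v⟫_ℝ := by
      simp [hψ, inner_sub_left]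
    rw [h1]
    calc |⟪gradient F (x + t • v) - gradient F x, v⟫_ℝ|
        ≤ ‖gradient F (x + t • v) - gradient F x‖ * ‖v‖ := abs_real_inner_le_norm _ _
      _ ≤ (L * ‖x + t • v - x‖) * ‖v‖ := by
          have := hLip (x + t • v) x
          nlinarith [norm_nonneg v]
      _ = L * ‖v‖ ^ 2 * t := by
          simp [norm_smul, abs_of_nonneg ht0]; ring
  calc |∫ t in (0:ℝ)..1, (ψ t - ψ 0)| ≤ ∫ t in (0:ℝ)..1, |ψ t - ψ 0| := by
        simpa using intervalIntegral.abs_integral_le_integral_abs (by norm_num : (0:ℝ) ≤ 1)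
          (f := fun t => ψ t - ψ 0)
    _ ≤ ∫ t in (0:ℝ)..1, L * ‖v‖ ^ 2 * t := by
        apply intervalIntegral.integral_mono_on (by norm_num)
          ((hcont.sub continuous_const).abs.intervalIntegrable 0 1)
          ((continuous_const.mul continuous_id).intervalIntegrable 0 1)
        exact hbound
    _ = L / 2 * ‖v‖ ^ 2 := by
        rw [intervalIntegral.integral_const_mul]
        simp [integral_id]; ring

end Helpers

section FD

open InnerProductSpace

lemma fdGrad_apply {d : ℕ} (F : EuclideanSpace ℝ (Fin d) → ℝ) (ν : ℝ)
    (x : EuclideanSpace ℝ (Fin d)) (i : Fin d) :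
    fdGrad F ν x i = (F (x + ν • EuclideanSpace.single i (1 : ℝ)) - F x) / ν := by
  simp only [fdGrad]
  rw [WithLp.ofLp_sum, Finset.sum_apply]
  simp [EuclideanSpace.single_apply]

lemma fdGrad_continuous {d : ℕ} {F : EuclideanSpace ℝ (Fin d) → ℝ} (hF : Continuous F)
    (ν : ℝ) : Continuous (fdGrad F ν) := by
  unfold fdGrad
  refine continuous_finset_sum _ fun j _ => ?_
  exact (((hF.comp (by continuity)).sub hF).div_const ν).smul continuous_const

lemma fd_error {d : ℕ} {F : EuclideanSpace ℝ (Fin d) → ℝ} {L ν : ℝ} (hL : 0 ≤ L)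
    (hν : 0 < ν) (hF : Differentiable ℝ F)
    (hLip : ∀ x y, ‖gradient F x - gradient F y‖ ≤ L * ‖x - y‖)
    (x : EuclideanSpace ℝ (Fin d)) :
    ‖fdGrad F ν x - gradient F x‖ ^ 2 ≤ d * (L * ν / 2) ^ 2 := by
  have hcoord : ∀ i : Fin d, |fdGrad F ν x i - gradient F x i| ≤ L * ν / 2 := by
    intro i
    have ht := taylor_bound hL hF hLip x (ν • EuclideanSpace.single i (1:ℝ))
    have hinner : ⟪gradient F x, ν • EuclideanSpace.single i (1:ℝ)⟫_ℝ
        = ν * gradient F x i := by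
      rw [real_inner_smul_right, EuclideanSpace.inner_single_right]
      simp
    have hnorm : ‖ν • EuclideanSpace.single i (1:ℝ)‖ = |ν| := by
      rw [norm_smul, EuclideanSpace.norm_single]
      simp
    rw [hinner, hnorm] at ht
    rw [fdGrad_apply]
    have h2 : (F (x + ν • EuclideanSpace.single i (1:ℝ)) - F x) / ν - gradient F x i
        = (F (x + ν • EuclideanSpace.single i (1:ℝ)) - F x - ν * gradient F x i) / ν := by
      field_simp
    rw [h2, abs_div, abs_of_pos hν, div_le_iff₀ hν]
    calc |F (x + ν • EuclideanSpace.single i (1:ℝ)) - F x - ν * gradient F x i|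
        ≤ L / 2 * |ν| ^ 2 := ht
      _ = L * ν / 2 * ν := by rw [abs_of_pos hν]; ring
  have hns : ‖fdGrad F ν x - gradient F x‖ ^ 2 = ∑ i, (fdGrad F ν x i - gradient F x i)^2 := by
    rw [EuclideanSpace.norm_eq, Real.sq_sqrt (by positivity)]
    simp [sq_abs]
  rw [hns]
  calc ∑ i, (fdGrad F ν x i - gradient F x i)^2 ≤ ∑ _i : Fin d, (L * ν / 2)^2 := by
        apply Finset.sum_le_sum
        intro i _
        have := hcoord i
        nlinarith [abs_nonneg (fdGrad F ν x i - gradient F x i),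
          sq_abs (fdGrad F ν x i - gradient F x i)]
    _ = d * (L * ν / 2) ^ 2 := by simp [Finset.card_univ]

lemma coord_sq_le_normsq {d : ℕ} (w : EuclideanSpace ℝ (Fin d)) (i : Fin d) :
    (w i)^2 ≤ ‖w‖^2 := by
  have : ‖w‖^2 = ∑ j, (w j)^2 := by
    rw [EuclideanSpace.norm_eq, Real.sq_sqrt (by positivity)]
    simp [sq_abs]
  rw [this]
  exact Finset.single_le_sum (fun j _ => sq_nonneg (w j)) (Finset.mem_univ i)

end FD

section Condexp

open InnerProductSpace

variable {Ω : Type*} {m m0 : MeasurableSpace Ω} {P : Measure Ω} [IsFiniteMeasure P]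

lemma condexp_clm_comp {E F : Type*} [NormedAddCommGroup E] [NormedSpace ℝ E] [CompleteSpace E]
    [NormedAddCommGroup F] [NormedSpace ℝ F] [CompleteSpace F]
    (hm : m ≤ m0) (T : E →L[ℝ] F) {f : Ω → E} (hf : Integrable f P) :
    P[fun ω => T (f ω)|m] =ᵐ[P] fun ω => T ((P[f|m]) ω) := by
  haveI : SigmaFinite (P.trim hm) := by infer_instance
  refine (ae_eq_condExp_of_forall_setIntegral_eq hm (T.integrable_comp hf)
    (fun s _ _ => (T.integrable_comp integrable_condExp).integrableOn)
    (fun s hs _ => ?_) ?_).symm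
  · rw [T.integral_comp_comm integrable_condExp.integrableOn,
      setIntegral_condExp hm hf hs, T.integral_comp_comm hf.integrableOn]
  · exact StronglyMeasurable.aestronglyMeasurable (T.continuous.comp_stronglyMeasurable stronglyMeasurable_condExp)

lemma condexp_inner_pullout {d : ℕ} (hm : m ≤ m0) {v G : Ω → EuclideanSpace ℝ (Fin d)}
    (hv : StronglyMeasurable[m] v) (hG : Integrable G P)
    (hv2 : Integrable (fun ω => ‖v ω‖^2) P) (hG2 : Integrable (fun ω => ‖G ω‖^2) P) :
    P[fun ω => ⟪v ω, G ω⟫_ℝ|m] =ᵐ[P] fun ω => ⟪v ω, (P[G|m]) ω⟫_ℝ := by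
  haveI : SigmaFinite (P.trim hm) := by infer_instance
  have hGj : ∀ j : Fin d, Integrable (fun ω => G ω j) P := fun j => by
    have := (EuclideanSpace.proj (𝕜 := ℝ) j).integrable_comp hG
    simpa [PiLp.proj_apply] using this
  have hvj : ∀ j : Fin d, StronglyMeasurable[m] (fun ω => v ω j) := fun j => by
    have := (EuclideanSpace.proj (𝕜 := ℝ) j).continuous.comp_stronglyMeasurable hv
    simpa [PiLp.proj_apply] using this
  have hprod : ∀ j : Fin d, Integrable (fun ω => v ω j * G ω j) P := by
    intro j
    refine Integrable.mono' ((hv2.add hG2).div_const 2)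
      ((((hvj j).mono hm).aestronglyMeasurable).mul (hGj j).1) (ae_of_all _ fun ω => ?_)
    have h1 := coord_sq_le_normsq (v ω) j
    have h2 := coord_sq_le_normsq (G ω) j
    have : |v ω j| * |G ω j| ≤ (‖v ω‖^2 + ‖G ω‖^2)/2 := by
      nlinarith [abs_nonneg (v ω j), abs_nonneg (G ω j), sq_abs (v ω j), sq_abs (G ω j),
        sq_nonneg (|v ω j| - |G ω j|)]
    simpa using this
  have hinner_eq : (fun ω => ⟪v ω, G ω⟫_ℝ) = fun ω => ∑ j, v ω j * G ω j := by
    funext ω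
    simp [PiLp.inner_apply, RCLike.inner_apply, mul_comm]
  have hsum := condExp_finset_sum (μ := P) (m := m)
      (f := fun j (ω : Ω) => v ω j * G ω j) (s := Finset.univ) (fun j _ => hprod j)
  have h1 : ∀ j : Fin d, P[fun ω => v ω j * G ω j|m]
      =ᵐ[P] fun ω => v ω j * ((P[G|m]) ω j) := by
    intro j
    have hmul : P[fun ω => v ω j * G ω j|m]
        =ᵐ[P] fun ω => v ω j * (P[fun ω => G ω j|m]) ω :=
      condExp_mul_of_stronglyMeasurable_left (μ := P) (hvj j) (hprod j) (hGj j)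
    have hc : P[fun ω => G ω j|m] =ᵐ[P] fun ω => (P[G|m]) ω j := by
      have := condexp_clm_comp hm (EuclideanSpace.proj (𝕜 := ℝ) j) hG
      simpa [PiLp.proj_apply] using this
    filter_upwards [hmul, hc] with ω h1 h2
    rw [h1, h2]
  have e : (fun ω => ∑ j, v ω j * G ω j) = ∑ j : Fin d, fun ω => v ω j * G ω j := by
    funext ω; rw [Finset.sum_apply]
  rw [hinner_eq, e]
  refine hsum.trans ?_
  have hall := ae_all_iff.mpr h1
  filter_upwards [hall] with ω hω
  rw [Finset.sum_apply]
  simp only [PiLp.inner_apply, RCLike.inner_apply, conj_trivial]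
  exact Finset.sum_congr rfl fun j _ => (hω j).trans (mul_comm _ _)

end Condexp

set_option maxHeartbeats 2000000 in
/-- (Linear convergence of adaptive-sampling FD method.) Let `F` have
`L`-Lipschitz gradient and be `μ`-strongly convex (PL sense) with minimizer `x*`,
`0 < μ ≤ L`, `ν, θ > 0`. Suppose the iterates satisfy
`x_{k+1} = x_k − α G_k` with `α = 1/(4(1+θ²)L)`, where
`E[G_k | 𝓕_k] = ∇^{FD}F(x_k)` and
`E[‖G_k − ∇^{FD}F(x_k)‖² | 𝓕_k] ≤ θ² ‖∇^{FD}F(x_k)‖²` a.s. Then for every `k`,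
`E[F(x_k) − F(x*)] ≤ (1 − Ω₃)^k (E[F(x₀)] − F(x*) − Ω₄) + Ω₄`, where
`Ω₃ = μ/(8(1+θ²)L)` and `Ω₄ = 3L²ν²d/(8μ)`. -/
theorem linear_convergence_FD_adaptive_sampling
    {d : ℕ} {Ω : Type*} {mΩ : MeasurableSpace Ω}
    (P : Measure Ω) [IsProbabilityMeasure P]
    (F : EuclideanSpace ℝ (Fin d) → ℝ) (L μ ν θ : ℝ)
    (hμ : 0 < μ) (hμL : μ ≤ L) (hν : 0 < ν) (hθ : 0 < θ)
    (hF : Differentiable ℝ F)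
    (hLip : ∀ x y, ‖gradient F x - gradient F y‖ ≤ L * ‖x - y‖)
    (xstar : EuclideanSpace ℝ (Fin d)) (hmin : ∀ y, F xstar ≤ F y)
    (hsc : ∀ y, 2 * μ * (F y - F xstar) ≤ ‖gradient F y‖ ^ 2)
    (ℱ : Filtration ℕ mΩ)
    (x G : ℕ → Ω → EuclideanSpace ℝ (Fin d))
    (hadapted : ∀ k, StronglyMeasurable[ℱ k] (x k))
    (hintF : ∀ k, Integrable (fun ω => F (x k ω)) P)
    (hintgrad : ∀ k, Integrable (fun ω => ‖gradient F (x k ω)‖ ^ 2) P)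
    (hintG : ∀ k, Integrable (fun ω => ‖G k ω‖ ^ 2) P)
    (hupdate : ∀ k ω, x (k + 1) ω = x k ω - (1 / (4 * (1 + θ ^ 2) * L)) • G k ω)
    (hcondmean : ∀ k, (P[G k | ℱ k]) =ᵐ[P] fun ω => fdGrad F ν (x k ω))
    (hcondvar : ∀ k, (P[(fun ω => ‖G k ω - fdGrad F ν (x k ω)‖ ^ 2) | ℱ k])
        ≤ᵐ[P] fun ω => θ ^ 2 * ‖fdGrad F ν (x k ω)‖ ^ 2) :
    ∀ k, ∫ ω, (F (x k ω) - F xstar) ∂P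
      ≤ (1 - μ / (8 * (1 + θ ^ 2) * L)) ^ k *
          ((∫ ω, F (x 0 ω) ∂P) - F xstar - 3 * L ^ 2 * ν ^ 2 * d / (8 * μ))
        + 3 * L ^ 2 * ν ^ 2 * d / (8 * μ) := by
  classical
  have hL0 : 0 < L := lt_of_lt_of_le hμ hμL
  have hθ2 : (0:ℝ) < 1 + θ ^ 2 := by positivity
  set α : ℝ := 1 / (4 * (1 + θ ^ 2) * L) with hα_def
  have hα : 0 < α := by rw [hα_def]; positivity
  set Ω₃ : ℝ := μ / (8 * (1 + θ ^ 2) * L) with hΩ₃_def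
  set Ω₄ : ℝ := 3 * L ^ 2 * ν ^ 2 * d / (8 * μ) with hΩ₄_def
  set E2 : ℝ := (d : ℝ) * (L * ν / 2) ^ 2 with hE2_def
  have hE2 : 0 ≤ E2 := by rw [hE2_def]; positivity
  have hΩ₃α : Ω₃ = α * μ / 2 := by
    rw [hΩ₃_def, hα_def]; field_simp; ring
  have hΩ₃pos : 0 < Ω₃ := by rw [hΩ₃_def]; positivity
  have hΩ₃le1 : Ω₃ ≤ 1 := by
    rw [hΩ₃_def, div_le_one (by positivity)]
    nlinarith [sq_nonneg θ]
  have hΩ₃Ω₄ : Ω₃ * Ω₄ = 3 * α / 4 * E2 := by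
    rw [hΩ₃_def, hΩ₄_def, hα_def, hE2_def]
    field_simp; ring
  have hceq : L / 2 * α ^ 2 * (1 + θ ^ 2) = α / 8 := by
    rw [hα_def]; field_simp; ring
  -- integral of the difference
  have hEk : ∀ k, ∫ ω, (F (x k ω) - F xstar) ∂P = (∫ ω, F (x k ω) ∂P) - F xstar := by
    intro k
    rw [integral_sub (hintF k) (integrable_const _), integral_const, probReal_univ, one_smul]
  -- the one-step inequality
  have hstep : ∀ k, ∫ ω, (F (x (k+1) ω) - F xstar) ∂P
      ≤ (1 - Ω₃) * (∫ ω, (F (x k ω) - F xstar) ∂P) + Ω₃ * Ω₄ := by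
    intro k
    haveI : SigmaFinite (P.trim (ℱ.le k)) := by infer_instance
    set v : Ω → EuclideanSpace ℝ (Fin d) := fun ω => gradient F (x k ω) with hv_def
    set g : Ω → EuclideanSpace ℝ (Fin d) := fun ω => fdGrad F ν (x k ω) with hg_def
    -- measurability facts
    have hxSM : StronglyMeasurable (x k) := (hadapted k).mono (ℱ.le k)
    have hvSMF : StronglyMeasurable[ℱ k] v :=
      (grad_continuous hL0.le hLip).comp_stronglyMeasurable (hadapted k)
    have hvSM : StronglyMeasurable v := hvSMF.mono (ℱ.le k)
    have hgSMF : StronglyMeasurable[ℱ k] g :=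
      (fdGrad_continuous hF.continuous ν).comp_stronglyMeasurable (hadapted k)
    have hgSM : StronglyMeasurable g := hgSMF.mono (ℱ.le k)
    have hG_eq : G k = fun ω => α⁻¹ • (x k ω - x (k+1) ω) := by
      funext ω
      rw [hupdate k ω]
      simp [smul_smul, inv_mul_cancel₀ (ne_of_gt hα)]
    have hGSM : StronglyMeasurable (G k) := by
      rw [hG_eq]
      exact ((hxSM.sub ((hadapted (k+1)).mono (ℱ.le (k+1)))).const_smul α⁻¹ :)
    -- integrability facts
    have hintGk : Integrable (G k) P := by
      refine Integrable.mono' (((integrable_const (1:ℝ)).add (hintG k)).div_const 2)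
        hGSM.aestronglyMeasurable (ae_of_all _ fun ω => ?_)
      have h := sq_nonneg (‖G k ω‖ - 1)
      simp only [Pi.add_apply]
      nlinarith
    have hv2 : Integrable (fun ω => ‖v ω‖ ^ 2) P := hintgrad k
    have hB : ∀ ω, ‖g ω - v ω‖ ^ 2 ≤ E2 := fun ω =>
      fd_error hL0.le hν hF hLip (x k ω)
    have hgv : ∀ ω, ‖g ω‖ ≤ ‖v ω‖ + ‖g ω - v ω‖ := by
      intro ω
      calc ‖g ω‖ = ‖v ω + (g ω - v ω)‖ := by rw [add_sub_cancel]
        _ ≤ ‖v ω‖ + ‖g ω - v ω‖ := norm_add_le _ _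
    have hgle : ∀ ω, ‖g ω‖ ^ 2 ≤ 2 * ‖v ω‖ ^ 2 + 2 * E2 := by
      intro ω
      have h1 := hgv ω
      have h2 := hB ω
      nlinarith [norm_nonneg (g ω), norm_nonneg (v ω), norm_nonneg (g ω - v ω),
        sq_nonneg (‖v ω‖ - ‖g ω - v ω‖)]
    have hg2 : Integrable (fun ω => ‖g ω‖ ^ 2) P := by
      refine Integrable.mono' ((hv2.const_mul 2).add (integrable_const (2 * E2)))
        ((hgSM.norm.pow 2).aestronglyMeasurable) (ae_of_all _ fun ω => ?_)
      have h0 : ‖‖g ω‖ ^ 2‖ = ‖g ω‖ ^ 2 := by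
        rw [Real.norm_eq_abs, abs_of_nonneg (by positivity)]
      simp only [Pi.add_apply, h0]
      linarith [hgle ω]
    have hinner_vG : Integrable (fun ω => ⟪v ω, G k ω⟫_ℝ) P := by
      refine Integrable.mono' ((hv2.add (hintG k)).div_const 2)
        (hvSM.aestronglyMeasurable.inner hGSM.aestronglyMeasurable)
        (ae_of_all _ fun ω => ?_)
      have h1 := abs_real_inner_le_norm (v ω) (G k ω)
      have h2 := sq_nonneg (‖v ω‖ - ‖G k ω‖)
      simp only [Pi.add_apply, Real.norm_eq_abs]
      nlinarith [norm_nonneg (v ω), norm_nonneg (G k ω)]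
    have hinner_gG : Integrable (fun ω => ⟪g ω, G k ω⟫_ℝ) P := by
      refine Integrable.mono' ((hg2.add (hintG k)).div_const 2)
        (hgSM.aestronglyMeasurable.inner hGSM.aestronglyMeasurable)
        (ae_of_all _ fun ω => ?_)
      have h1 := abs_real_inner_le_norm (g ω) (G k ω)
      have h2 := sq_nonneg (‖g ω‖ - ‖G k ω‖)
      simp only [Pi.add_apply, Real.norm_eq_abs]
      nlinarith [norm_nonneg (g ω), norm_nonneg (G k ω)]
    have hinner_vg : Integrable (fun ω => ⟪v ω, g ω⟫_ℝ) P := by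
      refine Integrable.mono' ((hv2.add hg2).div_const 2)
        (hvSM.aestronglyMeasurable.inner hgSM.aestronglyMeasurable)
        (ae_of_all _ fun ω => ?_)
      have h1 := abs_real_inner_le_norm (v ω) (g ω)
      have h2 := sq_nonneg (‖v ω‖ - ‖g ω‖)
      simp only [Pi.add_apply, Real.norm_eq_abs]
      nlinarith [norm_nonneg (v ω), norm_nonneg (g ω)]
    -- first moment identity: ∫ ⟪v, G⟫ = ∫ ⟪v, g⟫
    have hfirst : ∫ ω, ⟪v ω, G k ω⟫_ℝ ∂P = ∫ ω, ⟪v ω, g ω⟫_ℝ ∂P := by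
      rw [← integral_condExp (ℱ.le k) (f := fun ω => ⟪v ω, G k ω⟫_ℝ)]
      refine integral_congr_ae ?_
      refine (condexp_inner_pullout (ℱ.le k) hvSMF hintGk hv2 (hintG k)).trans ?_
      filter_upwards [hcondmean k] with ω hω
      rw [hω]
    -- second moment bound: ∫ ‖G‖² ≤ (1+θ²) ∫ ‖g‖²
    have hsecond : ∫ ω, ‖G k ω‖ ^ 2 ∂P ≤ (1 + θ ^ 2) * ∫ ω, ‖g ω‖ ^ 2 ∂P := by
      have hsplit : (fun ω => ‖G k ω‖ ^ 2)
          = (fun ω => ‖G k ω - g ω‖ ^ 2) + fun ω => 2 * ⟪g ω, G k ω⟫_ℝ - ‖g ω‖ ^ 2 := by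
        funext ω
        have h1 := norm_sub_sq_real (G k ω) (g ω)
        have h2 : ⟪G k ω, g ω⟫_ℝ = ⟪g ω, G k ω⟫_ℝ := real_inner_comm _ _
        simp only [Pi.add_apply]
        nlinarith [h1, h2]
      have hdiff2 : Integrable (fun ω => ‖G k ω - g ω‖ ^ 2) P := by
        refine Integrable.mono' (((hintG k).const_mul 2).add (hg2.const_mul 2))
          (((hGSM.sub hgSM).norm.pow 2).aestronglyMeasurable) (ae_of_all _ fun ω => ?_)
        have h1 : ‖G k ω - g ω‖ ≤ ‖G k ω‖ + ‖g ω‖ := norm_sub_le _ _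
        have h0 : ‖‖G k ω - g ω‖ ^ 2‖ = ‖G k ω - g ω‖ ^ 2 := by
          rw [Real.norm_eq_abs, abs_of_nonneg (by positivity)]
        simp only [Pi.add_apply, h0]
        nlinarith [norm_nonneg (G k ω - g ω), norm_nonneg (G k ω), norm_nonneg (g ω),
          sq_nonneg (‖G k ω‖ - ‖g ω‖)]
      have hrest : Integrable (fun ω => 2 * ⟪g ω, G k ω⟫_ℝ - ‖g ω‖ ^ 2) P :=
        (hinner_gG.const_mul 2).sub hg2
      -- conditional expectation of ⟪g, G⟫ is ‖g‖²
      have hpull : P[fun ω => ⟪g ω, G k ω⟫_ℝ|ℱ k] =ᵐ[P] fun ω => ‖g ω‖ ^ 2 := by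
        refine (condexp_inner_pullout (ℱ.le k) hgSMF hintGk hg2 (hintG k)).trans ?_
        filter_upwards [hcondmean k] with ω hω
        rw [hω]
        exact real_inner_self_eq_norm_sq _
      have hg2c : P[fun ω => ‖g ω‖ ^ 2|ℱ k] = fun ω => ‖g ω‖ ^ 2 :=
        condExp_of_stronglyMeasurable (ℱ.le k) (hgSMF.norm.pow 2) hg2
      have h2inner : P[fun ω => 2 * ⟪g ω, G k ω⟫_ℝ|ℱ k]
          =ᵐ[P] fun ω => 2 * (P[fun ω => ⟪g ω, G k ω⟫_ℝ|ℱ k]) ω := by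
        have := condExp_smul (μ := P) (m := ℱ k) (2:ℝ) (fun ω => ⟪g ω, G k ω⟫_ℝ)
        simpa [Pi.smul_def, smul_eq_mul] using this
      have hcond_le : ∀ᵐ ω ∂P, (P[fun ω => ‖G k ω‖ ^ 2|ℱ k]) ω ≤ (1 + θ ^ 2) * ‖g ω‖ ^ 2 := by
        have hvar := hcondvar k
        have hadd : P[fun ω => ‖G k ω‖ ^ 2|ℱ k]
            =ᵐ[P] P[fun ω => ‖G k ω - g ω‖ ^ 2|ℱ k]
              + P[fun ω => 2 * ⟪g ω, G k ω⟫_ℝ - ‖g ω‖ ^ 2|ℱ k] := by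
          rw [hsplit]
          exact condExp_add hdiff2 hrest _
        have hsub : P[fun ω => 2 * ⟪g ω, G k ω⟫_ℝ - ‖g ω‖ ^ 2|ℱ k]
            =ᵐ[P] P[fun ω => 2 * ⟪g ω, G k ω⟫_ℝ|ℱ k] - P[fun ω => ‖g ω‖ ^ 2|ℱ k] :=
          condExp_sub (hinner_gG.const_mul 2) hg2 _
        filter_upwards [hvar, hadd, hsub, h2inner, hpull] with ω h1 h2 h3 h4 h5
        have hvfd : (fun ω => ‖G k ω - fdGrad F ν (x k ω)‖ ^ 2) = fun ω => ‖G k ω - g ω‖ ^ 2 := rfl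
        rw [hvfd] at h1
        have hg2c' : (P[fun ω => ‖g ω‖ ^ 2|ℱ k]) ω = ‖g ω‖ ^ 2 := by rw [hg2c]
        simp only [Pi.add_apply, Pi.sub_apply] at h2 h3
        rw [h2, h3, h4, h5, hg2c']
        have : θ ^ 2 * ‖fdGrad F ν (x k ω)‖ ^ 2 = θ ^ 2 * ‖g ω‖ ^ 2 := rfl
        rw [this] at h1
        nlinarith [h1]
      calc ∫ ω, ‖G k ω‖ ^ 2 ∂P = ∫ ω, (P[fun ω => ‖G k ω‖ ^ 2|ℱ k]) ω ∂P :=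
            (integral_condExp (ℱ.le k)).symm
        _ ≤ ∫ ω, (1 + θ ^ 2) * ‖g ω‖ ^ 2 ∂P :=
            integral_mono_ae integrable_condExp (hg2.const_mul _) hcond_le
        _ = (1 + θ ^ 2) * ∫ ω, ‖g ω‖ ^ 2 ∂P := integral_const_mul _ _
    -- pointwise descent inequality
    have hptdesc : ∀ ω, F (x (k+1) ω) - F xstar
        ≤ (F (x k ω) - F xstar) - α * ⟪v ω, G k ω⟫_ℝ + L / 2 * α ^ 2 * ‖G k ω‖ ^ 2 := by
      intro ω
      have hupd : x (k+1) ω = x k ω + (-α) • G k ω := by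
        rw [hupdate k ω, neg_smul, ← sub_eq_add_neg]
      have ht := taylor_bound hL0.le hF hLip (x k ω) ((-α) • G k ω)
      rw [← hupd] at ht
      have hi : ⟪gradient F (x k ω), (-α) • G k ω⟫_ℝ = -α * ⟪v ω, G k ω⟫_ℝ := by
        rw [real_inner_smul_right]
      have hn : ‖(-α) • G k ω‖ ^ 2 = α ^ 2 * ‖G k ω‖ ^ 2 := by
        rw [norm_smul, Real.norm_eq_abs, abs_neg, abs_of_pos hα]; ring
      rw [hi, hn] at ht
      have := abs_le.mp ht
      linarith [this.2]
    -- Integrate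
    have intA : Integrable (fun ω => F (x k ω) - F xstar) P :=
      (hintF k).sub (integrable_const _)
    have intB : Integrable (fun ω => α * ⟪v ω, G k ω⟫_ℝ) P := hinner_vG.const_mul α
    have intC : Integrable (fun ω => L / 2 * α ^ 2 * ‖G k ω‖ ^ 2) P := (hintG k).const_mul _
    have intAB : Integrable (fun ω => F (x k ω) - F xstar - α * ⟪v ω, G k ω⟫_ℝ) P :=
      intA.sub intB
    have intBg : Integrable (fun ω => α * ⟪v ω, g ω⟫_ℝ) P := hinner_vg.const_mul α
    have intCg : Integrable (fun ω => α / 8 * ‖g ω‖ ^ 2) P := hg2.const_mul _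
    have intABg : Integrable (fun ω => F (x k ω) - F xstar - α * ⟪v ω, g ω⟫_ℝ) P :=
      intA.sub intBg
    have hstep1 : ∫ ω, (F (x (k+1) ω) - F xstar) ∂P
        ≤ (∫ ω, (F (x k ω) - F xstar) ∂P) - α * (∫ ω, ⟪v ω, G k ω⟫_ℝ ∂P)
          + L / 2 * α ^ 2 * (∫ ω, ‖G k ω‖ ^ 2 ∂P) := by
      calc ∫ ω, (F (x (k+1) ω) - F xstar) ∂P
          ≤ ∫ ω, ((F (x k ω) - F xstar) - α * ⟪v ω, G k ω⟫_ℝ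
              + L / 2 * α ^ 2 * ‖G k ω‖ ^ 2) ∂P :=
            integral_mono ((hintF (k+1)).sub (integrable_const _)) (intAB.add intC) hptdesc
        _ = (∫ ω, (F (x k ω) - F xstar) ∂P) - α * (∫ ω, ⟪v ω, G k ω⟫_ℝ ∂P)
              + L / 2 * α ^ 2 * (∫ ω, ‖G k ω‖ ^ 2 ∂P) := by
            rw [integral_add intAB intC, integral_sub intA intB,
              integral_const_mul, integral_const_mul]
    have hstep2 : ∫ ω, (F (x (k+1) ω) - F xstar) ∂P
        ≤ ∫ ω, ((F (x k ω) - F xstar) - α * ⟪v ω, g ω⟫_ℝ + α / 8 * ‖g ω‖ ^ 2) ∂P := by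
      refine hstep1.trans ?_
      rw [hfirst]
      have h2 : L / 2 * α ^ 2 * (∫ ω, ‖G k ω‖ ^ 2 ∂P)
          ≤ α / 8 * ∫ ω, ‖g ω‖ ^ 2 ∂P := by
        have hnn : 0 ≤ L / 2 * α ^ 2 := by positivity
        calc L / 2 * α ^ 2 * (∫ ω, ‖G k ω‖ ^ 2 ∂P)
            ≤ L / 2 * α ^ 2 * ((1 + θ ^ 2) * ∫ ω, ‖g ω‖ ^ 2 ∂P) :=
              mul_le_mul_of_nonneg_left hsecond hnn
          _ = α / 8 * ∫ ω, ‖g ω‖ ^ 2 ∂P := by rw [← hceq]; ring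
      rw [integral_add intABg intCg, integral_sub intA intBg,
        integral_const_mul, integral_const_mul]
      linarith [h2]
    -- pointwise algebra
    have hptalg : ∀ ω, (F (x k ω) - F xstar) - α * ⟪v ω, g ω⟫_ℝ + α / 8 * ‖g ω‖ ^ 2
        ≤ (1 - Ω₃) * (F (x k ω) - F xstar) + Ω₃ * Ω₄ := by
      intro ω
      set A := ‖v ω‖ with hA
      set B := ‖g ω - v ω‖ with hB'
      have hBA : B ^ 2 ≤ E2 := hB ω
      have hiv : ⟪v ω, g ω⟫_ℝ ≥ A ^ 2 - A * B := by
        have h1 : ⟪v ω, g ω⟫_ℝ = ‖v ω‖ ^ 2 + ⟪v ω, g ω - v ω⟫_ℝ := by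
          rw [inner_sub_right, real_inner_self_eq_norm_sq]; ring
        have h2 := abs_real_inner_le_norm (v ω) (g ω - v ω)
        rw [h1]
        nlinarith [neg_abs_le (⟪v ω, g ω - v ω⟫_ℝ), h2]
      have hgB : ‖g ω‖ ≤ A + B := hgv ω
      have hPL : 2 * μ * (F (x k ω) - F xstar) ≤ A ^ 2 := hsc (x k ω)
      have hFk0 : 0 ≤ F (x k ω) - F xstar := sub_nonneg.mpr (hmin (x k ω))
      have key : -⟪v ω, g ω⟫_ℝ + 1 / 8 * ‖g ω‖ ^ 2
          ≤ -(μ / 2) * (F (x k ω) - F xstar) + 3 / 4 * E2 := by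
        nlinarith [sq_nonneg (A - B), hiv, hgB, hBA, hPL, norm_nonneg (g ω),
          norm_nonneg (v ω), norm_nonneg (g ω - v ω), sq_nonneg (A + B - ‖g ω‖)]
      have key2 := mul_le_mul_of_nonneg_left key hα.le
      rw [hΩ₃Ω₄, hΩ₃α]
      nlinarith [key2]
    have hstep3 : ∫ ω, ((F (x k ω) - F xstar) - α * ⟪v ω, g ω⟫_ℝ + α / 8 * ‖g ω‖ ^ 2) ∂P
        ≤ ∫ ω, ((1 - Ω₃) * (F (x k ω) - F xstar) + Ω₃ * Ω₄) ∂P := by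
      refine integral_mono (intABg.add intCg) ?_ hptalg
      exact (intA.const_mul _).add (integrable_const _)
    have hstep4 : ∫ ω, ((1 - Ω₃) * (F (x k ω) - F xstar) + Ω₃ * Ω₄) ∂P
        = (1 - Ω₃) * (∫ ω, (F (x k ω) - F xstar) ∂P) + Ω₃ * Ω₄ := by
      rw [integral_add (intA.const_mul (1 - Ω₃)) (integrable_const (Ω₃ * Ω₄)),
        integral_const_mul, integral_const, probReal_univ, one_smul]
    linarith [hstep2, hstep3, hstep4.le, hstep4.ge]
  -- induction
  intro k
  induction k with
  | zero =>
    rw [hEk 0, pow_zero, one_mul]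
    linarith
  | succ k ih =>
    have h1 := hstep k
    have h2 : (1 - Ω₃) * (∫ ω, (F (x k ω) - F xstar) ∂P)
        ≤ (1 - Ω₃) * ((1 - Ω₃) ^ k * ((∫ ω, F (x 0 ω) ∂P) - F xstar - Ω₄) + Ω₄) :=
      mul_le_mul_of_nonneg_left ih (by linarith)
    calc ∫ ω, (F (x (k+1) ω) - F xstar) ∂P
        ≤ (1 - Ω₃) * (∫ ω, (F (x k ω) - F xstar) ∂P) + Ω₃ * Ω₄ := h1
      _ ≤ (1 - Ω₃) * ((1 - Ω₃) ^ k * ((∫ ω, F (x 0 ω) ∂P) - F xstar - Ω₄) + Ω₄) + Ω₃ * Ω₄ := by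
          linarith
      _ = (1 - Ω₃) ^ (k+1) * ((∫ ω, F (x 0 ω) ∂P) - F xstar - Ω₄) + Ω₄ := by ring
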